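/- Let I ⊂ K[x_0,…,x_n] be a saturated Borel-fixed ideal defining d points in ℙⁿ (constant Hilbert polynomial d), and let s be its Castelnuovo–Mumford regularity. Then x_1^s x_0^{d−s} ∈ I_d and x_1^{s−1} x_0^{d−s+1} ∉ I_d; equivalently, among the degree-d monomials outside I that are pure in x_0 and x_1, exactly the monomials x_0^d, x_1 x_0^{d−1}, …, x_1^{s−1} x_0^{d−s+1} occur. -/

import Mathlib

open Finset

/-- Elementary decreasing move `e⁻_i` : replace one factor `x_i` by `x_{i-1}`. -/
def downAt (i : ℕ) (α : ℕ → ℕ) : ℕ → ℕ :=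
  fun k => if k = i then α i - 1 else if k = i - 1 then α (i - 1) + 1 else α k

/-- Elementary increasing move `e⁺_i` : replace one factor `x_i` by `x_{i+1}`. -/
def upAt (i : ℕ) (α : ℕ → ℕ) : ℕ → ℕ :=
  fun k => if k = i then α i - 1 else if k = i + 1 then α (i + 1) + 1 else α k

/-- `β` is obtained from `α` by one admissible decreasing move. -/
def DownStep (n : ℕ) (α β : ℕ → ℕ) : Prop :=
  ∃ i, 1 ≤ i ∧ i ≤ n ∧ 0 < α i ∧ β = downAt i α

/-- `β` is obtained from `α` by one admissible increasing move. -/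
def UpStep (n : ℕ) (α β : ℕ → ℕ) : Prop :=
  ∃ i, i < n ∧ 0 < α i ∧ β = upAt i α

/-- Borel partial order: `geB n α β` means `x^α ≥_B x^β`, i.e. `β` is reachable
from `α` by a finite sequence of decreasing moves. -/
def geB (n : ℕ) (α β : ℕ → ℕ) : Prop :=
  Relation.ReflTransGen (DownStep n) α β

/-- `Mon n r` : (exponents of) monomials of degree `r` in `x_0,…,x_n`, i.e. `𝒫(n,r)`. -/
def Mon (n r : ℕ) : Set (ℕ → ℕ) :=
  {α | (∀ k, n < k → α k = 0) ∧ ∑ i ∈ Finset.range (n + 1), α i = r}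

/-- A Borel set in `𝒫(n,r)`: closed under admissible increasing moves. -/
def IsBorelSet (n r : ℕ) (B : Set (ℕ → ℕ)) : Prop :=
  B ⊆ Mon n r ∧ ∀ α ∈ B, ∀ β, UpStep n α β → β ∈ B

/-- `σ(j) = ∑_{i=j}^n α_i`. -/
def sumFrom (n j : ℕ) (α : ℕ → ℕ) : ℕ := ∑ i ∈ Finset.Icc j n, α i

/-- Multiplication by the variable `x_i`. -/
def addVar (i : ℕ) (α : ℕ → ℕ) : ℕ → ℕ := fun k => if k = i then α k + 1 else α k

/-- Division by the variable `x_i`. -/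
def subVar (i : ℕ) (α : ℕ → ℕ) : ℕ → ℕ := fun k => if k = i then α k - 1 else α k

/-- The result of applying the composition of decreasing moves `(e⁻_l)^{μ l}` (over all `l`). -/
def applyMoves (μ α : ℕ → ℕ) : ℕ → ℕ := fun k => α k + μ (k + 1) - μ k

/-- The composition of decreasing moves encoded by `μ` is admissible on `α`. -/
def AdmissibleOn (μ α : ℕ → ℕ) : Prop := ∀ k, μ k ≤ α k + μ (k + 1)

/-- `𝔉_α` : admissible compositions of decreasing moves with indices in `[1,j]`
sending `α` inside `B` (contains the identity `μ = 0` as soon as `α ∈ B`). -/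
def MovesFam (j : ℕ) (α : ℕ → ℕ) (B : Set (ℕ → ℕ)) : Set (ℕ → ℕ) :=
  {μ | (∀ l, μ l ≠ 0 → 1 ≤ l ∧ l ≤ j) ∧ AdmissibleOn μ α ∧ applyMoves μ α ∈ B}

/-- `min x^γ` : least index of a variable dividing `x^γ`. -/
noncomputable def minIdx (γ : ℕ → ℕ) : ℕ := sInf {k | γ k ≠ 0}

/-- `x^α >_DegLex x^β` for monomials of the same degree (`x_n ≻ ⋯ ≻ x_0`). -/
def degLexGT (α β : ℕ → ℕ) : Prop :=
  ∃ j, β j < α j ∧ ∀ k, j < k → α k = β k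

/-- `x^α >_RevLex x^β` for monomials of the same degree (`x_n ≻ ⋯ ≻ x_0`). -/
def revLexGT (α β : ℕ → ℕ) : Prop :=
  ∃ j, α j < β j ∧ ∀ k, k < j → α k = β k

/-- The monomial `x_1^k x_0^{d-k}`. -/
def pure01 (d k : ℕ) : ℕ → ℕ :=
  fun m => if m = 1 then k else if m = 0 then d - k else 0

/-- For a Borel set `B` of degree-`d` monomials (points case), the regularity of the
saturation of `⟨B⟩` is the least `s` with `x_1^s x_0^{d-s} ∈ B`. -/
noncomputable def regSat (d : ℕ) (B : Set (ℕ → ℕ)) : ℕ := sInf {s | pure01 d s ∈ B}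

/-- Degree-`d` part of the lexsegment ideal `L = (x_n,…,x_2,x_1^d)`. -/
def lexSegPts (n d : ℕ) : Set (ℕ → ℕ) :=
  {α ∈ Mon n d | (∃ i, 2 ≤ i ∧ i ≤ n ∧ 0 < α i) ∨ d ≤ α 1}

/-- A monomial ideal in `K[x_0,…,x_n]`, given by its set of (exponents of) monomials. -/
def IsMonomialIdeal (n : ℕ) (S : Set (ℕ → ℕ)) : Prop :=
  (∀ α ∈ S, ∀ k, n < k → α k = 0) ∧ ∀ α ∈ S, ∀ k, k ≤ n → addVar k α ∈ S

/-- Strongly stable (Borel-fixed in characteristic 0): `x^α ∈ I`, `x_i ∣ x^α`, `i < j ≤ n`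
implies `x_j x^α / x_i ∈ I`. -/
def StronglyStable (n : ℕ) (S : Set (ℕ → ℕ)) : Prop :=
  ∀ α ∈ S, ∀ i j, i < j → j ≤ n → 0 < α i →
    (fun k => if k = i then α i - 1 else if k = j then α j + 1 else α k) ∈ S

/-- `x^α` is a minimal generator of the monomial ideal `S`. -/
def MinGen (n : ℕ) (S : Set (ℕ → ℕ)) (α : ℕ → ℕ) : Prop :=
  α ∈ S ∧ ∀ k, k ≤ n → 0 < α k → subVar k α ∉ S


/-- The monomial `x_1^k x_0^j` (exponent vector). -/
def gv (j k : ℕ) : ℕ → ℕ := fun m => if m = 1 then k else if m = 0 then j else 0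

lemma gv_succ (j k : ℕ) : gv (j+1) k = addVar 0 (gv j k) := by
  funext m
  simp only [gv, addVar]
  by_cases h0 : m = 0
  · subst h0; simp
  · simp [h0]

lemma lemA {n : ℕ} {S : Set (ℕ → ℕ)}
    (hideal : ∀ α ∈ S, ∀ k, k ≤ n → addVar k α ∈ S)
    (hsat : ∀ α, addVar 0 α ∈ S → α ∈ S) (j k : ℕ) :
    gv j k ∈ S ↔ gv 0 k ∈ S := by
  induction j with
  | zero => rfl
  | succ j ih =>
    rw [gv_succ]
    constructor
    · intro h; exact ih.mp (hsat _ h)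
    · intro h; exact hideal _ (ih.mpr h) 0 (Nat.zero_le n)

lemma sum_gv (n j k : ℕ) (hn : 1 ≤ n) :
    ∑ i ∈ Finset.range (n+1), gv j k i = k + j := by
  have h1 : (1:ℕ) ∈ Finset.range (n+1) := by simp; omega
  have h0 : (0:ℕ) ∈ (Finset.range (n+1)).erase 1 := by simp
  rw [← Finset.add_sum_erase _ _ h1, ← Finset.add_sum_erase _ _ h0]
  have hz : ∑ i ∈ ((Finset.range (n+1)).erase 1).erase 0, gv j k i = 0 := by
    apply Finset.sum_eq_zero
    intro i hi
    have hi0 : i ≠ 0 := (Finset.mem_erase.mp hi).1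
    have hi1 : i ≠ 1 := (Finset.mem_erase.mp (Finset.mem_erase.mp hi).2).1
    simp [gv, hi0, hi1]
  rw [hz]
  simp [gv]

lemma sum_subVar {n k : ℕ} (β : ℕ → ℕ) (hk : k ∈ Finset.range (n+1)) (hpos : 0 < β k) :
    ∑ i ∈ Finset.range (n+1), subVar k β i = (∑ i ∈ Finset.range (n+1), β i) - 1 := by
  have h1 := (Finset.add_sum_erase _ (subVar k β) hk).symm
  have h2 := (Finset.add_sum_erase _ β hk).symm
  have h3 : ∑ i ∈ (Finset.range (n+1)).erase k, subVar k β i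
      = ∑ i ∈ (Finset.range (n+1)).erase k, β i :=
    Finset.sum_congr rfl (fun i hi => by simp [subVar, Finset.ne_of_mem_erase hi])
  have h4 : subVar k β k = β k - 1 := by simp [subVar]
  omega

lemma mon_finite (n t : ℕ) : (Mon n t).Finite := by
  have hsub : Mon n t ⊆
      (fun f : Fin (n+1) → Fin (t+1) => fun m => if h : m < n+1 then (f ⟨m, h⟩ : ℕ) else 0)
        '' Set.univ := by
    intro α hα
    refine ⟨fun i => ⟨α i, ?_⟩, trivial, ?_⟩
    · have hle : α i ≤ t := by
        have h1 := Finset.single_le_sum (f := α) (fun j _ => Nat.zero_le (α j))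
          (Finset.mem_range.mpr i.2)
        rw [hα.2] at h1
        exact h1
      omega
    · funext m
      by_cases h : m < n + 1
      · simp [h]
      · simp [h, hα.1 m (by omega)]
  exact (Set.finite_univ.image _).subset hsub

/-- All monomials of degree ≥ s' supported in `x_1..x_n` are in S,
given that `x_1^{s'} ∈ S` and S is strongly stable and an ideal. -/
lemma lemB {n : ℕ} {S : Set (ℕ → ℕ)} (hn : 1 ≤ n)
    (hideal : ∀ α ∈ S, ∀ k, k ≤ n → addVar k α ∈ S)
    (hss : StronglyStable n S) {s' : ℕ} (hbase : gv 0 s' ∈ S) :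
    ∀ β, β 0 = 0 → (∀ m, n < m → β m = 0) →
      s' ≤ ∑ i ∈ Finset.range (n+1), β i → β ∈ S := by
  -- inner: degree exactly s'
  have lemC : ∀ β, β 0 = 0 → (∀ m, n < m → β m = 0) →
      (∑ i ∈ Finset.range (n+1), β i = s') → β ∈ S := by
    have key : ∀ w β, (∑ i ∈ Finset.Icc 2 n, β i = w) → β 0 = 0 →
        (∀ m, n < m → β m = 0) →
        (∑ i ∈ Finset.range (n+1), β i = s') → β ∈ S := by
      intro w
      induction w using Nat.strong_induction_on with
      | _ w ih =>
        intro β hw h0 hsupp hdeg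
        by_cases hex : ∃ k, 2 ≤ k ∧ k ≤ n ∧ 0 < β k
        · obtain ⟨k, hk2, hkn, hkpos⟩ := hex
          set β' : ℕ → ℕ :=
            fun m => if m = k then β k - 1 else if m = 1 then β 1 + 1 else β m with hβ'def
          have hk1 : k ≠ 1 := by omega
          have hkicc : k ∈ Finset.Icc 2 n := by simp; omega
          have h1mem : (1:ℕ) ∈ Finset.range (n+1) := by simp; omega
          have hkmemr : k ∈ (Finset.range (n+1)).erase 1 := by simp; omega
          -- Icc sum decreases
          have hIcc1 := (Finset.add_sum_erase _ β hkicc).symm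
          have hIcc2 := (Finset.add_sum_erase _ β' hkicc).symm
          have hIcc3 : ∑ i ∈ (Finset.Icc 2 n).erase k, β' i
              = ∑ i ∈ (Finset.Icc 2 n).erase k, β i := by
            apply Finset.sum_congr rfl
            intro i hi
            have hik : i ≠ k := Finset.ne_of_mem_erase hi
            have hi1 : i ≠ 1 := by
              have := Finset.mem_Icc.mp (Finset.mem_erase.mp hi).2
              omega
            simp [hβ'def, hik, hi1]
          have hβ'k : β' k = β k - 1 := by simp [hβ'def]
          have hwlt : ∑ i ∈ Finset.Icc 2 n, β' i < w := by omega
          -- degree preserved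
          have hd1 := (Finset.add_sum_erase _ β h1mem).symm
          have hd2 := (Finset.add_sum_erase _ β' h1mem).symm
          have hd3 := (Finset.add_sum_erase _ β hkmemr).symm
          have hd4 := (Finset.add_sum_erase _ β' hkmemr).symm
          have hd5 : ∑ i ∈ ((Finset.range (n+1)).erase 1).erase k, β' i
              = ∑ i ∈ ((Finset.range (n+1)).erase 1).erase k, β i := by
            apply Finset.sum_congr rfl
            intro i hi
            have hik : i ≠ k := (Finset.mem_erase.mp hi).1
            have hi1 : i ≠ 1 := (Finset.mem_erase.mp (Finset.mem_erase.mp hi).2).1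
            simp [hβ'def, hik, hi1]
          have hβ'1 : β' 1 = β 1 + 1 := by simp [hβ'def, hk1.symm, Ne.symm hk1]
          have hdeg' : ∑ i ∈ Finset.range (n+1), β' i = s' := by omega
          have hk0 : (0:ℕ) ≠ k := by omega
          have hβ'mem : β' ∈ S := by
            apply ih _ hwlt β' rfl
            · simp [hβ'def, hk0, h0]
            · intro m hm
              have hmk : m ≠ k := by omega
              have hm1 : m ≠ 1 := by omega
              simp [hβ'def, hmk, hm1, hsupp m hm]
            · exact hdeg'
          have hmove := hss β' hβ'mem 1 k (by omega) hkn (by rw [hβ'1]; omega)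
          have heq : (fun m => if m = 1 then β' 1 - 1 else if m = k then β' k + 1 else β' m)
              = β := by
            funext m
            by_cases hm1 : m = 1
            · subst hm1; simp [hβ'1]
            · by_cases hmk : m = k
              · subst hmk; simp [hm1, hβ'k]; omega
              · simp [hm1, hmk, hβ'def]
          rwa [heq] at hmove
        · push_neg at hex
          have hβ1 : ∑ i ∈ Finset.range (n+1), β i = β 1 := by
            apply Finset.sum_eq_single_of_mem 1 (by simp; omega)
            intro i hi hne
            have hile : i ≤ n := by simpa using Nat.lt_succ_iff.mp (Finset.mem_range.mp hi)
            rcases Nat.eq_zero_or_pos i with h | h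
            · subst h; exact h0
            · have := hex i (by omega) hile; omega
          have : β = gv 0 s' := by
            funext m
            by_cases hm1 : m = 1
            · subst hm1; simp [gv]; omega
            · by_cases hm0 : m = 0
              · subst hm0; simp [gv, h0]
              · simp only [gv, hm1, hm0, if_false]
                by_cases hmn : m ≤ n
                · have := hex m (by omega) hmn; omega
                · exact hsupp m (by omega)
          rwa [this]
    exact fun β h0 hs hd => key _ β rfl h0 hs hd
  -- outer: degree ≥ s'
  have key : ∀ m, s' ≤ m → ∀ β, β 0 = 0 → (∀ m', n < m' → β m' = 0) →
      ∑ i ∈ Finset.range (n+1), β i = m → β ∈ S := by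
    intro m hm
    induction m, hm using Nat.le_induction with
    | base => exact fun β h0 hs hd => lemC β h0 hs hd
    | succ m hm ih =>
      intro β h0 hsupp hdeg
      have hex : ∃ i ∈ Finset.range (n+1), β i ≠ 0 :=
        Finset.exists_ne_zero_of_sum_ne_zero (by rw [hdeg]; omega)
      obtain ⟨k, hkmem, hkne⟩ := hex
      have hkn : k ≤ n := by simpa using Nat.lt_succ_iff.mp (Finset.mem_range.mp hkmem)
      have hk0 : k ≠ 0 := fun h => hkne (h ▸ h0)
      have hkpos : 0 < β k := Nat.pos_of_ne_zero hkne
      have hsumsub := sum_subVar β hkmem hkpos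
      have hsub : subVar k β ∈ S := by
        apply ih
        · simp [subVar, Ne.symm hk0, h0]
        · intro m' hm'
          have : m' ≠ k := by omega
          simp [subVar, this, hsupp m' hm']
        · omega
      have := hideal _ hsub k hkn
      have heq : addVar k (subVar k β) = β := by
        funext m
        by_cases hmk : m = k
        · subst hmk; simp [addVar, subVar]; omega
        · simp [addVar, subVar, hmk]
      rwa [heq] at this
  intro β h0 hsupp hs
  exact key _ hs β h0 hsupp rfl

/-- for a saturated Borel-fixed ideal of d points with regularity s,
among the degree-d monomials pure in x_0, x_1, exactly x_0^d, …, x_1^{s-1}x_0^{d-s+1}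
lie outside the ideal, i.e. x_1^k x_0^{d-k} ∈ I iff s ≤ k. -/
theorem stmt_14 (n d s : ℕ) (hn : 1 ≤ n) (S : Set (ℕ → ℕ))
    (hsupp : ∀ α ∈ S, ∀ k, n < k → α k = 0)
    (hideal : ∀ α ∈ S, ∀ k, k ≤ n → addVar k α ∈ S)
    (hss : StronglyStable n S)
    (hsat : ∀ α, addVar 0 α ∈ S → α ∈ S)
    (hHP : ∃ t0, ∀ t, t0 ≤ t → (Mon n t \ S).ncard = d)
    (hreg1 : ∀ α, MinGen n S α → ∑ i ∈ Finset.range (n + 1), α i ≤ s)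
    (hreg2 : ∃ α, MinGen n S α ∧ ∑ i ∈ Finset.range (n + 1), α i = s) :
    ∀ k, k ≤ d → (pure01 d k ∈ S ↔ s ≤ k) := by
  classical
  obtain ⟨t0, hHPf⟩ := hHP
  have hA : ∀ j k, gv j k ∈ S ↔ gv 0 k ∈ S := lemA hideal hsat
  -- nonemptiness of {k | x_1^k ∈ S}
  have hne : {k | gv 0 k ∈ S}.Nonempty := by
    by_contra hnone
    have hnot : ∀ k, gv 0 k ∉ S := fun k hk => hnone ⟨k, hk⟩
    set t := max t0 d with ht
    have hcard := hHPf t (le_max_left _ _)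
    have hfin := mon_finite n t
    have hmem : ∀ k ≤ t, gv (t - k) k ∈ Mon n t \ S := by
      intro k hk
      constructor
      · constructor
        · intro m hm
          have hm1 : m ≠ 1 := by omega
          have hm0 : m ≠ 0 := by omega
          simp [gv, hm1, hm0]
        · rw [sum_gv n _ _ hn]; omega
      · intro hkS
        exact hnot k ((hA _ k).mp hkS)
    have hinj : Set.InjOn (fun k => gv (t - k) k) ↑(Finset.range (t+1)) := by
      intro a _ b _ hab
      have := congrFun hab 1
      simpa [gv] using this
    have hsub : ↑((Finset.range (t+1)).image (fun k => gv (t - k) k)) ⊆ Mon n t \ S := by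
      intro x hx
      simp only [Finset.coe_image, Set.mem_image, Finset.mem_coe, Finset.mem_range] at hx
      obtain ⟨k, hk, rfl⟩ := hx
      exact hmem k (by omega)
    have hle : t + 1 ≤ d := by
      have h1 : ((Finset.range (t+1)).image (fun k => gv (t - k) k)).card = t + 1 := by
        rw [Finset.card_image_of_injOn hinj]
        simp
      have h2 := Set.ncard_le_ncard hsub hfin.diff
      rw [Set.ncard_coe_finset, h1, hcard] at h2
      exact h2
    omega
  set s' := sInf {k | gv 0 k ∈ S} with hs'def
  have hs'mem : gv 0 s' ∈ S := Nat.sInf_mem hne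
  have hmono : ∀ k, s' ≤ k → gv 0 k ∈ S := by
    intro k hk
    induction k, hk using Nat.le_induction with
    | base => exact hs'mem
    | succ k hk ih =>
      have := hideal _ ih 1 hn
      have heq : addVar 1 (gv 0 k) = gv 0 (k+1) := by
        funext m
        by_cases hm : m = 1
        · subst hm; simp [addVar, gv]
        · simp [addVar, gv, hm]
      rwa [heq] at this
  -- s' ≤ s : x_1^{s'} is a minimal generator
  have hs'le : s' ≤ s := by
    have hmg : MinGen n S (gv 0 s') := by
      refine ⟨hs'mem, ?_⟩
      intro k hkn hkpos
      have hk1 : k = 1 ∧ 0 < s' := by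
        by_cases h : k = 1
        · subst h; simp [gv] at hkpos; omega
        · by_cases h0 : k = 0 <;> simp [gv, h, h0] at hkpos
      obtain ⟨rfl, hpos⟩ := hk1
      intro hmem
      have heq : subVar 1 (gv 0 s') = gv 0 (s' - 1) := by
        funext m
        by_cases hm : m = 1
        · subst hm; simp [subVar, gv]
        · simp [subVar, gv, hm]
      rw [heq] at hmem
      have := Nat.sInf_le (show s' - 1 ∈ {k | gv 0 k ∈ S} from hmem)
      omega
    have := hreg1 _ hmg
    rwa [sum_gv n 0 s' hn, Nat.add_zero] at this
  -- s ≤ s'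
  have hsle : s ≤ s' := by
    obtain ⟨α, hαmg, hαdeg⟩ := hreg2
    by_contra hlt
    push_neg at hlt
    have hα0 : α 0 = 0 := by
      by_contra h
      have hpos : 0 < α 0 := Nat.pos_of_ne_zero h
      have heq : addVar 0 (subVar 0 α) = α := by
        funext m
        by_cases hm : m = 0
        · subst hm; simp [addVar, subVar]; omega
        · simp [addVar, subVar, hm]
      exact hαmg.2 0 (Nat.zero_le n) hpos (hsat _ (by rw [heq]; exact hαmg.1))
    have hαsupp := hsupp α hαmg.1
    have hex : ∃ i ∈ Finset.range (n+1), α i ≠ 0 :=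
      Finset.exists_ne_zero_of_sum_ne_zero (by rw [hαdeg]; omega)
    obtain ⟨k, hkmem, hkne⟩ := hex
    have hkn : k ≤ n := by simpa using Nat.lt_succ_iff.mp (Finset.mem_range.mp hkmem)
    have hk0 : k ≠ 0 := fun h => hkne (h ▸ hα0)
    have hkpos : 0 < α k := Nat.pos_of_ne_zero hkne
    have hsumsub := sum_subVar α hkmem hkpos
    have hsubmem : subVar k α ∈ S := by
      apply lemB hn hideal hss hs'mem
      · simp [subVar, Ne.symm hk0, hα0]
      · intro m hm
        have : m ≠ k := by omega
        simp [subVar, this, hαsupp m hm]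
      · omega
    exact hαmg.2 k hkn hkpos hsubmem
  have hss' : s = s' := le_antisymm hsle hs'le
  intro k hk
  have hpk : pure01 d k = gv (d - k) k := rfl
  rw [hpk, hA]
  constructor
  · intro h
    rw [hss']
    exact Nat.sInf_le (show k ∈ {k | gv 0 k ∈ S} from h)
  · intro h
    exact hmono k (by omega)
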